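/- For n ≥ 2, irrational α, and h ∈ BS(1,n), the conjugate of the Smirnov positive cone satisfies h P_α h⁻¹ = P_{ρ(h)(α)}. Consequently, since every non-identity element of ρ(BS(1,n)) has only rational fixed points and α ↦ P_α is injective on irrationals, h P_α h⁻¹ = P_α implies h = 1; i.e., P_α lies in the free part of the conjugation action. -/

import Mathlib

/-- The single relator `b a b⁻¹ a⁻ⁿ` of the Baumslag–Solitar group `BS(1,n)`, with
generators indexed by `Bool` (`false ↦ a`, `true ↦ b`). -/
def BSRels (n : ℕ) : Set (FreeGroup Bool) :=
  {FreeGroup.of true * FreeGroup.of false * (FreeGroup.of true)⁻¹ * (FreeGroup.of false ^ n)⁻¹}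

/-- The Baumslag–Solitar group `BS(1,n) = ⟨a, b ∣ b a b⁻¹ = aⁿ⟩`. -/
abbrev BS (n : ℕ) := PresentedGroup (BSRels n)

/-- The generator `a` of `BS(1,n)`. -/
def BSa (n : ℕ) : BS n := PresentedGroup.of false

/-- The generator `b` of `BS(1,n)`. -/
def BSb (n : ℕ) : BS n := PresentedGroup.of true

lemma BS_rel (n : ℕ) : BSb n * BSa n * (BSb n)⁻¹ = (BSa n) ^ n := by
  have h1 : (FreeGroup.of true * FreeGroup.of false * (FreeGroup.of true)⁻¹ *
      (FreeGroup.of false ^ n)⁻¹ : FreeGroup Bool) ∈ Subgroup.normalClosure (BSRels n) :=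
    Subgroup.subset_normalClosure rfl
  have h2 : PresentedGroup.mk (BSRels n) (FreeGroup.of true * FreeGroup.of false *
      (FreeGroup.of true)⁻¹ * (FreeGroup.of false ^ n)⁻¹) = 1 :=
    (QuotientGroup.eq_one_iff _).2 h1
  rw [map_mul, map_mul, map_inv, map_inv, map_pow] at h2
  exact mul_inv_eq_one.mp h2

lemma BS_conj1 (n : ℕ) (m : ℤ) : BSb n * (BSa n) ^ m * (BSb n)⁻¹ = (BSa n) ^ (m * n) := by
  rw [← conj_zpow, BS_rel, ← zpow_natCast, ← zpow_mul, mul_comm (n : ℤ) m]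

lemma BS_conj (n : ℕ) (k : ℕ) (m : ℤ) :
    (BSb n) ^ k * (BSa n) ^ m * ((BSb n) ^ k)⁻¹ = (BSa n) ^ (m * (n : ℤ) ^ k) := by
  induction k generalizing m with
  | zero => simp
  | succ k ih =>
    have : (BSb n) ^ (k + 1) * (BSa n) ^ m * ((BSb n) ^ (k + 1))⁻¹ =
        (BSb n) ^ k * (BSb n * (BSa n) ^ m * (BSb n)⁻¹) * ((BSb n) ^ k)⁻¹ := by group
    rw [this, BS_conj1, ih]; congr 1; ring

lemma BS_push1 (n : ℕ) (k : ℕ) (m : ℤ) :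
    (BSb n) ^ k * (BSa n) ^ m = (BSa n) ^ (m * (n : ℤ) ^ k) * (BSb n) ^ k := by
  rw [← BS_conj]; group

lemma BS_push2 (n : ℕ) (k : ℕ) (m : ℤ) :
    (BSa n) ^ m * ((BSb n) ^ k)⁻¹ = ((BSb n) ^ k)⁻¹ * (BSa n) ^ (m * (n : ℤ) ^ k) := by
  rw [← BS_conj]; group

lemma BS_nf (n : ℕ) (h : BS n) : ∃ (i j : ℕ) (m : ℤ),
    h = ((BSb n) ^ i)⁻¹ * (BSa n) ^ m * (BSb n) ^ j := by
  have hmem : h ∈ Subgroup.closure (Set.range (PresentedGroup.of : Bool → BS n)) := by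
    rw [PresentedGroup.closure_range_of]; trivial
  induction hmem using Subgroup.closure_induction with
  | mem x hx =>
    obtain ⟨c, rfl⟩ := hx
    cases c with
    | false => exact ⟨0, 0, 1, by simp [BSa]⟩
    | true => exact ⟨0, 1, 0, by simp [BSb]⟩
  | one => exact ⟨0, 0, 0, by simp⟩
  | inv x hx ih =>
    obtain ⟨i, j, m, rfl⟩ := ih
    exact ⟨j, i, -m, by group⟩
  | mul x y hx hy ihx ihy =>
    obtain ⟨i1, j1, m1, rfl⟩ := ihx
    obtain ⟨i2, j2, m2, rfl⟩ := ihy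
    rcases le_or_gt i2 j1 with hle | hlt
    · refine ⟨i1, (j1 - i2) + j2, m1 + m2 * (n : ℤ) ^ (j1 - i2), ?_⟩
      have hj1 : (BSb n) ^ j1 = (BSb n) ^ (j1 - i2) * (BSb n) ^ i2 := by
        rw [← pow_add, Nat.sub_add_cancel hle]
      calc ((BSb n) ^ i1)⁻¹ * (BSa n) ^ m1 * (BSb n) ^ j1 *
            (((BSb n) ^ i2)⁻¹ * (BSa n) ^ m2 * (BSb n) ^ j2)
          = ((BSb n) ^ i1)⁻¹ * (BSa n) ^ m1 *
            ((BSb n) ^ (j1 - i2) * (BSa n) ^ m2) * (BSb n) ^ j2 := by rw [hj1]; group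
        _ = ((BSb n) ^ i1)⁻¹ * (BSa n) ^ m1 *
            ((BSa n) ^ (m2 * (n : ℤ) ^ (j1 - i2)) * (BSb n) ^ (j1 - i2)) * (BSb n) ^ j2 := by
            rw [BS_push1]
        _ = ((BSb n) ^ i1)⁻¹ * (BSa n) ^ (m1 + m2 * (n : ℤ) ^ (j1 - i2)) *
            (BSb n) ^ ((j1 - i2) + j2) := by rw [zpow_add, pow_add]; group
    · refine ⟨i1 + (i2 - j1), j2, m1 * (n : ℤ) ^ (i2 - j1) + m2, ?_⟩
      have hi2 : (BSb n) ^ i2 = (BSb n) ^ j1 * (BSb n) ^ (i2 - j1) := by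
        rw [← pow_add, Nat.add_sub_cancel' hlt.le]
      calc ((BSb n) ^ i1)⁻¹ * (BSa n) ^ m1 * (BSb n) ^ j1 *
            (((BSb n) ^ i2)⁻¹ * (BSa n) ^ m2 * (BSb n) ^ j2)
          = ((BSb n) ^ i1)⁻¹ * ((BSa n) ^ m1 * ((BSb n) ^ (i2 - j1))⁻¹) *
            ((BSa n) ^ m2 * (BSb n) ^ j2) := by rw [hi2]; group
        _ = ((BSb n) ^ i1)⁻¹ * (((BSb n) ^ (i2 - j1))⁻¹ * (BSa n) ^ (m1 * (n : ℤ) ^ (i2 - j1))) *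
            ((BSa n) ^ m2 * (BSb n) ^ j2) := by rw [BS_push2]
        _ = ((BSb n) ^ (i1 + (i2 - j1)))⁻¹ * (BSa n) ^ (m1 * (n : ℤ) ^ (i2 - j1) + m2) *
            (BSb n) ^ j2 := by rw [zpow_add, pow_add]; group

/-- For `n ≥ 2`, irrational `α`, and `h ∈ BS(1,n)`, the conjugate of the
Smirnov cone satisfies `h P_α h⁻¹ = P_{ρ(h)(α)}` (note `g ∈ h P_α h⁻¹ ↔ h⁻¹gh ∈ P_α`);
consequently `h P_α h⁻¹ = P_α` implies `h = 1`, i.e. `P_α` lies in the free part of the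
conjugation action. -/
theorem smirnov_free_part (n : ℕ) (hn : 2 ≤ n) (A B : Equiv.Perm ℝ)
    (hA : ∀ x, A x = x + 1) (hB : ∀ x, B x = n * x)
    (ρ : BS n →* Equiv.Perm ℝ) (hρa : ρ (BSa n) = A) (hρb : ρ (BSb n) = B)
    (α : ℝ) (hα : Irrational α) (h : BS n) :
    ({g : BS n | α < ρ (h⁻¹ * g * h) α} = {g : BS n | ρ h α < ρ g (ρ h α)}) ∧
    ({g : BS n | α < ρ (h⁻¹ * g * h) α} = {g : BS n | α < ρ g α} → h = 1) := by
  have hnR : (2 : ℝ) ≤ (n : ℝ) := by exact_mod_cast hn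
  have hn0 : (0 : ℝ) < (n : ℝ) := by linarith
  have hn1 : (1 : ℝ) < (n : ℝ) := by linarith
  -- basic dynamics
  have hAinv : ∀ x, (A⁻¹ : Equiv.Perm ℝ) x = x - 1 := by
    intro x; apply A.injective
    rw [Equiv.Perm.coe_inv, Equiv.apply_symm_apply, hA]; ring
  have hApow : ∀ (m : ℤ) (x : ℝ), (A ^ m) x = x + m := by
    intro m
    induction m using Int.induction_on with
    | zero => simp
    | succ k ih =>
      intro x
      rw [zpow_add_one, Equiv.Perm.mul_apply, ih, hA]; push_cast; ring
    | pred k ih =>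
      intro x
      rw [zpow_sub_one, Equiv.Perm.mul_apply, ih, hAinv]; push_cast; ring
  have hBpow : ∀ (i : ℕ) (x : ℝ), (B ^ i) x = (n : ℝ) ^ i * x := by
    intro i
    induction i with
    | zero => simp
    | succ k ih =>
      intro x
      rw [pow_succ, Equiv.Perm.mul_apply, ih, hB, pow_succ]; ring
  have hBpowinv : ∀ (i : ℕ) (x : ℝ), ((B ^ i)⁻¹ : Equiv.Perm ℝ) x = x / (n : ℝ) ^ i := by
    intro i x
    apply (B ^ i).injective
    rw [Equiv.Perm.coe_inv, Equiv.apply_symm_apply, hBpow]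
    field_simp
  have hρ_nf : ∀ (i j : ℕ) (m : ℤ) (x : ℝ),
      ρ (((BSb n) ^ i)⁻¹ * (BSa n) ^ m * (BSb n) ^ j) x =
        ((n : ℝ) ^ j * x + m) / (n : ℝ) ^ i := by
    intro i j m x
    rw [map_mul, map_mul, map_inv, map_pow, map_pow, map_zpow, hρa, hρb,
      Equiv.Perm.mul_apply, Equiv.Perm.mul_apply, hBpow, hApow, hBpowinv]
  -- normal form of h and strict monotonicity of ρ h
  obtain ⟨i, j, m, hform⟩ := BS_nf n h
  have hρh : ∀ x, ρ h x = ((n : ℝ) ^ j * x + m) / (n : ℝ) ^ i := by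
    intro x; rw [hform, hρ_nf]
  have hpi : (0 : ℝ) < (n : ℝ) ^ i := pow_pos hn0 i
  have hpj : (0 : ℝ) < (n : ℝ) ^ j := pow_pos hn0 j
  have hmono : StrictMono (ρ h) := by
    intro x y hxy
    rw [hρh, hρh]
    gcongr
  -- Part 1
  have hinvlt : ∀ z, α < ((ρ h)⁻¹ : Equiv.Perm ℝ) z ↔ ρ h α < z := by
    intro z
    have := hmono.lt_iff_lt (a := α) (b := ((ρ h)⁻¹ : Equiv.Perm ℝ) z)
    rw [Equiv.Perm.coe_inv, Equiv.apply_symm_apply] at this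
    exact this.symm
  have part1 : ({g : BS n | α < ρ (h⁻¹ * g * h) α} = {g : BS n | ρ h α < ρ g (ρ h α)}) := by
    ext g
    simp only [Set.mem_setOf_eq]
    have hconj : ρ (h⁻¹ * g * h) α = ((ρ h)⁻¹ : Equiv.Perm ℝ) (ρ g (ρ h α)) := by
      rw [map_mul, map_mul, map_inv, Equiv.Perm.mul_apply, Equiv.Perm.mul_apply]
    rw [hconj, hinvlt]
  refine ⟨part1, ?_⟩
  intro heq
  rw [part1] at heq
  set β := ρ h α with hβdef
  have hiff : ∀ g : BS n, β < ρ g β ↔ α < ρ g α := by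
    intro g
    constructor
    · intro hg; exact (Set.ext_iff.mp heq g).mp hg
    · intro hg; exact (Set.ext_iff.mp heq g).mpr hg
  -- test elements
  have htest : ∀ (i' : ℕ) (r : ℤ) (γ : ℝ),
      (γ < ρ (((BSb n) ^ i')⁻¹ * (BSa n) ^ (-r) * (BSb n) ^ (i' + 1)) γ) ↔
        (r : ℝ) < (((n : ℝ) - 1) * (n : ℝ) ^ i') * γ := by
    intro i' r γ
    rw [hρ_nf, lt_div_iff₀ (pow_pos hn0 i'), pow_succ]
    push_cast
    constructor <;> intro hh <;> nlinarith [pow_pos hn0 i']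
  have hfind : ∀ u v : ℝ, u < v → ∃ (i' : ℕ) (r : ℤ),
      (((n : ℝ) - 1) * (n : ℝ) ^ i') * u < r ∧ (r : ℝ) < (((n : ℝ) - 1) * (n : ℝ) ^ i') * v := by
    intro u v huv
    obtain ⟨i', hi'⟩ := pow_unbounded_of_one_lt ((v - u)⁻¹) hn1
    have hvu : (0 : ℝ) < v - u := sub_pos.2 huv
    have hinv : (v - u) * (v - u)⁻¹ = 1 := mul_inv_cancel₀ (ne_of_gt hvu)
    have hpos : (0 : ℝ) < (n : ℝ) ^ i' := pow_pos hn0 i'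
    have hd1 : 1 < (((n : ℝ) - 1) * (n : ℝ) ^ i') * (v - u) := by
      have h1 : 1 < (n : ℝ) ^ i' * (v - u) := by nlinarith
      nlinarith
    refine ⟨i', ⌊(((n : ℝ) - 1) * (n : ℝ) ^ i') * u⌋ + 1, ?_, ?_⟩
    · push_cast
      exact Int.lt_floor_add_one _
    · push_cast
      have := Int.floor_le ((((n : ℝ) - 1) * (n : ℝ) ^ i') * u)
      nlinarith
  -- β = α
  have hβα : β = α := by
    by_contra hne
    rcases lt_or_gt_of_ne hne with hlt | hlt
    · obtain ⟨i', r, hr1, hr2⟩ := hfind β α hlt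
      have := (hiff (((BSb n) ^ i')⁻¹ * (BSa n) ^ (-r) * (BSb n) ^ (i' + 1))).mpr
        ((htest i' r α).mpr hr2)
      rw [htest] at this
      linarith
    · obtain ⟨i', r, hr1, hr2⟩ := hfind α β hlt
      have := (hiff (((BSb n) ^ i')⁻¹ * (BSa n) ^ (-r) * (BSb n) ^ (i' + 1))).mp
        ((htest i' r β).mpr hr2)
      rw [htest] at this
      linarith
  -- conclude h = 1
  have heqn : (n : ℝ) ^ j * α + m = (n : ℝ) ^ i * α := by
    have h1 : ((n : ℝ) ^ j * α + m) / (n : ℝ) ^ i = α := by rw [← hρh]; exact hβα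
    field_simp at h1
    linarith [h1]
  have hji : j = i := by
    by_contra hji
    have hne2 : ((n : ℝ) ^ j - (n : ℝ) ^ i) ≠ 0 := by
      rw [sub_ne_zero]
      intro hcon
      apply hji
      have : (n ^ j : ℕ) = (n ^ i : ℕ) := by exact_mod_cast hcon
      exact Nat.pow_right_injective hn this
    apply hα
    refine ⟨(-m : ℚ) / ((n ^ j : ℚ) - (n ^ i : ℚ)), ?_⟩
    push_cast
    rw [div_eq_iff hne2]
    linarith [heqn]
  have hm0 : m = 0 := by
    have : (m : ℝ) = 0 := by rw [hji] at heqn; linarith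
    exact_mod_cast this
  rw [hform, hji, hm0, zpow_zero, mul_one, inv_mul_cancel]
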